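/- Let p ≥ 0 and c ∈ C(I) with c_m := min_I c satisfying −(π/(b−a))⁴ − p(π/(b−a))² < c_m ≤ 0. If u ∈ C⁴(I) solves u⁗ − p u'' + c u = h on I with u(a)=u(b)=u''(a)=u''(b)=0, then ‖u'‖_{L^2(I)} ≤ (π/√(b−a)) · ‖h‖_{C(I)} / ((π/(b−a))⁴ + p(π/(b−a))² + c_m). -/

import Mathlib

open Real MeasureTheory Set intervalIntegral

lemma myCS {a b : ℝ} (hab : a ≤ b) {f g : ℝ → ℝ}
    (hf : ContinuousOn f (Icc a b)) (hg : ContinuousOn g (Icc a b)) :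
    (∫ t in a..b, f t * g t) ^ 2 ≤ (∫ t in a..b, f t ^ 2) * (∫ t in a..b, g t ^ 2) := by
  have hf' : ContinuousOn f (uIcc a b) := by rwa [uIcc_of_le hab]
  have hg' : ContinuousOn g (uIcc a b) := by rwa [uIcc_of_le hab]
  have hff : IntervalIntegrable (fun t => f t ^ 2) volume a b :=
    (hf'.pow 2).intervalIntegrable
  have hgg : IntervalIntegrable (fun t => g t ^ 2) volume a b :=
    (hg'.pow 2).intervalIntegrable
  have hfg : IntervalIntegrable (fun t => f t * g t) volume a b :=
    (hf'.mul hg').intervalIntegrable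
  set A := ∫ t in a..b, f t ^ 2 with hA
  set B := ∫ t in a..b, f t * g t with hB
  set C := ∫ t in a..b, g t ^ 2 with hC
  have key : ∀ x : ℝ, 0 ≤ A * (x * x) + (2 * B) * x + C := by
    intro x
    have h1 : ∀ t, (x * f t + g t) ^ 2 = x * x * f t ^ 2 + 2 * x * (f t * g t) + g t ^ 2 := by
      intro t; ring
    have h2 : (0:ℝ) ≤ ∫ t in a..b, (x * f t + g t) ^ 2 :=
      intervalIntegral.integral_nonneg hab (fun t _ => sq_nonneg _)
    have h3 : (∫ t in a..b, (x * f t + g t) ^ 2) =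
        x * x * A + 2 * x * B + C := by
      rw [hA, hB, hC]
      rw [show (fun t => (x * f t + g t) ^ 2) = fun t =>
        x * x * f t ^ 2 + 2 * x * (f t * g t) + g t ^ 2 from funext h1]
      rw [intervalIntegral.integral_add ((hff.const_mul _).add (hfg.const_mul _)) hgg,
        intervalIntegral.integral_add (hff.const_mul _) (hfg.const_mul _),
        intervalIntegral.integral_const_mul, intervalIntegral.integral_const_mul]
    nlinarith [h2, h3]
  have := discrim_le_zero key
  rw [discrim] at this
  nlinarith [this]

lemma myParseval {T : ℝ} (hT : 0 < T) (s : ℝ) (g : ℝ → ℂ)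
    (hg : ContinuousOn g (Icc s (s + T))) (hgper : g s = g (s + T)) :
    Summable (fun n : ℤ => ‖fourierCoeffOn (lt_add_of_pos_right s hT) g n‖ ^ 2) ∧
    T * ∑' n : ℤ, ‖fourierCoeffOn (lt_add_of_pos_right s hT) g n‖ ^ 2
      = ∫ t in s..s + T, ‖g t‖ ^ 2 := by
  haveI : Fact (0 < T) := ⟨hT⟩
  set G : C(AddCircle T, ℂ) := ⟨AddCircle.liftIco T s g,
    AddCircle.liftIco_continuous hgper hg⟩ with hG
  set F := ContinuousMap.toLp (E := ℂ) 2 AddCircle.haarAddCircle ℂ G with hF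
  have hcoeff : ∀ n : ℤ, fourierCoeff (F : AddCircle T → ℂ) n
      = fourierCoeffOn (lt_add_of_pos_right s hT) g n := by
    intro n
    rw [fourierCoeff_toLp]
    show fourierCoeff (AddCircle.liftIco T s g) n = _
    exact fourierCoeff_liftIco_eq g n
  have hsum : Summable (fun n : ℤ => ‖fourierCoeffOn (lt_add_of_pos_right s hT) g n‖ ^ 2) := by
    have h1 := lp.memℓp (fourierBasis.repr F)
    rw [memℓp_gen_iff (by norm_num : (0:ℝ) < (2 : ENNReal).toReal)] at h1
    have : (fun n : ℤ => ‖(fourierBasis.repr F) n‖ ^ (2 : ENNReal).toReal)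
        = fun n : ℤ => ‖fourierCoeffOn (lt_add_of_pos_right s hT) g n‖ ^ 2 := by
      funext n
      rw [fourierBasis_repr, hcoeff n]
      norm_num
    rwa [this] at h1
  refine ⟨hsum, ?_⟩
  have hpars := tsum_sq_fourierCoeff F
  simp_rw [hcoeff] at hpars
  rw [hpars]
  have haeq : ∫ (t : AddCircle T), ‖(F : AddCircle T → ℂ) t‖ ^ 2 ∂AddCircle.haarAddCircle
      = ∫ (t : AddCircle T), ‖G t‖ ^ 2 ∂AddCircle.haarAddCircle := by
    apply MeasureTheory.integral_congr_ae
    filter_upwards [ContinuousMap.coeFn_toLp (E := ℂ) (p := 2) AddCircle.haarAddCircle (𝕜 := ℂ) G] with t ht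
    rw [ht]
  rw [haeq]
  have hvol : ∫ (t : AddCircle T), ‖G t‖ ^ 2
      = T * ∫ (t : AddCircle T), ‖G t‖ ^ 2 ∂AddCircle.haarAddCircle := by
    rw [AddCircle.volume_eq_smul_haarAddCircle, MeasureTheory.integral_smul_measure _ _,
      ENNReal.toReal_ofReal hT.le, smul_eq_mul]
  rw [← hvol, ← AddCircle.intervalIntegral_preimage T s (fun t => ‖G t‖ ^ 2)]
  apply intervalIntegral.integral_congr
  intro t ht
  rw [uIcc_of_le (lt_add_of_pos_right s hT).le] at ht
  rcases lt_or_eq_of_le ht.2 with h2 | h2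
  · show ‖G (t : AddCircle T)‖ ^ 2 = _
    rw [hG]
    show ‖AddCircle.liftIco T s g t‖ ^ 2 = _
    rw [AddCircle.liftIco_coe_apply ⟨ht.1, h2⟩]
  · show ‖G (t : AddCircle T)‖ ^ 2 = _
    rw [h2]
    have : ((s + T : ℝ) : AddCircle T) = (s : ℝ) := AddCircle.coe_add_period T s
    rw [hG]
    show ‖AddCircle.liftIco T s g (s + T : ℝ)‖ ^ 2 = _
    rw [this, AddCircle.liftIco_coe_apply ⟨le_refl s, lt_add_of_pos_right s hT⟩, hgper]

set_option maxHeartbeats 1000000 in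
lemma myWirtinger {a b : ℝ} (hab : a < b) {u : ℝ → ℝ} (hud : Differentiable ℝ u)
    (hu' : Continuous (deriv u)) (ha : u a = 0) (hb : u b = 0) :
    (π / (b - a)) ^ 2 * ∫ t in a..b, u t ^ 2 ≤ ∫ t in a..b, (deriv u t) ^ 2 := by
  set L := b - a with hLdef
  have hL : 0 < L := by simp [hLdef]; linarith
  set s := a - L with hsdef
  have hsT : s + 2 * L = b := by simp [hsdef, hLdef]; ring
  have hsa : s < a := by simp [hsdef]; linarith
  have h2L : 0 < 2 * L := by linarith
  -- odd reflection
  set g : ℝ → ℝ := fun t => if a ≤ t then u t else -u (2 * a - t) with hgdef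
  set g' : ℝ → ℝ := fun t => if a ≤ t then deriv u t else deriv u (2 * a - t) with hg'def
  -- derivative of the reflected branch
  have hrefl : ∀ x : ℝ, HasDerivAt (fun t => -u (2 * a - t)) (deriv u (2 * a - x)) x := by
    intro x
    have h1 : HasDerivAt (fun t : ℝ => 2 * a - t) (-1) x := (hasDerivAt_id x).const_sub (2 * a)
    have h2 := ((hud (2 * a - x)).hasDerivAt.comp x h1).neg
    rw [show deriv u (2 * a - x) = -(deriv u (2 * a - x) * -1) by ring]
    exact h2
  have hgd : ∀ x : ℝ, HasDerivAt g (g' x) x := by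
    intro x
    rcases lt_trichotomy a x with hx | hx | hx
    · have hev : g =ᶠ[nhds x] u := by
        filter_upwards [eventually_gt_nhds hx] with t ht
        simp [hgdef, le_of_lt ht]
      have : g' x = deriv u x := by simp [hg'def, le_of_lt hx]
      rw [this]
      exact (hud x).hasDerivAt.congr_of_eventuallyEq hev
    · -- x = a
      subst hx
      have hright : HasDerivWithinAt g (deriv u a) (Ici a) a := by
        refine ((hud a).hasDerivAt.hasDerivWithinAt).congr ?_ ?_
        · intro t ht; simp [hgdef, (mem_Ici.mp ht)]
        · simp [hgdef]
      have hleft : HasDerivWithinAt g (deriv u a) (Iic a) a := by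
        have h0 := (hrefl a).hasDerivWithinAt (s := Iic a)
        have heq : deriv u (2 * a - a) = deriv u a := by rw [show 2 * a - a = a by ring]
        rw [heq] at h0
        refine h0.congr ?_ ?_
        · intro t ht
          rcases lt_or_eq_of_le (mem_Iic.mp ht) with h | h
          · simp [hgdef, not_le.mpr h]
          · simp [h, hgdef, ha, show (2:ℝ) * a - a = a from by ring]
        · simp [hgdef, ha, show (2:ℝ) * a - a = a from by ring]
      have := hleft.union hright
      rw [Set.Iic_union_Ici, hasDerivWithinAt_univ] at this
      have hg'a : g' a = deriv u a := by simp [hg'def]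
      rwa [hg'a]
    · have hev : g =ᶠ[nhds x] (fun t => -u (2 * a - t)) := by
        filter_upwards [eventually_lt_nhds hx] with t ht
        simp [hgdef, not_le.mpr ht]
      have : g' x = deriv u (2 * a - x) := by simp [hg'def, not_le.mpr hx]
      rw [this]
      exact (hrefl x).congr_of_eventuallyEq hev
  have hgc : Continuous g := by
    have : Differentiable ℝ g := fun x => (hgd x).differentiableAt
    exact this.continuous
  have hg'c : Continuous g' := by
    refine Continuous.if_le hu' (hu'.comp (continuous_const.sub continuous_id)) continuous_const
      continuous_id ?_
    intro x hx
    rw [← hx, show 2 * a - a = a by ring]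
  -- endpoint values
  have hga : g s = 0 := by
    have h1 : ¬ a ≤ s := not_le.mpr hsa
    have h2 : 2 * a - s = b := by simp [hsdef, hLdef]; ring
    simp [hgdef, h1, h2, hb]
  have hgb : g (s + 2 * L) = 0 := by rw [hsT]; simp [hgdef, le_of_lt hab, hb]
  -- complexifications
  set gC : ℝ → ℂ := fun t => (g t : ℂ) with hgCdef
  set gC' : ℝ → ℂ := fun t => (g' t : ℂ) with hgC'def
  have hgCc : Continuous gC := Complex.continuous_ofReal.comp hgc
  have hgC'c : Continuous gC' := Complex.continuous_ofReal.comp hg'c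
  have hsb : s < s + 2 * L := lt_add_of_pos_right s h2L
  -- Fourier coefficient relation
  have hcoeff : ∀ n : ℤ, n ≠ 0 →
      ‖fourierCoeffOn hsb gC n‖ ^ 2 ≤ (L / π) ^ 2 * ‖fourierCoeffOn hsb gC' n‖ ^ 2 := by
    intro n hn
    have hder : ∀ x ∈ uIcc s (s + 2 * L), HasDerivAt gC (gC' x) x := fun x _ =>
      (hgd x).ofReal_comp
    have hint : IntervalIntegrable gC' volume s (s + 2 * L) :=
      hgC'c.intervalIntegrable _ _
    have hrel := fourierCoeffOn_of_hasDerivAt hsb hn hder hint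
    have hzero : gC (s + 2 * L) - gC s = 0 := by
      simp [hgCdef, hga, hgb]
    rw [hzero, mul_zero, zero_sub] at hrel
    have hTcast : ((s + 2 * L : ℝ) : ℂ) - ((s : ℝ) : ℂ) = ((2 * L : ℝ) : ℂ) := by
      push_cast; ring
    rw [hTcast] at hrel
    -- take norms
    have hnorm : ‖fourierCoeffOn hsb gC n‖
        = ‖(1 : ℂ) / (-2 * ↑π * Complex.I * (n : ℂ))‖ * (2 * L) * ‖fourierCoeffOn hsb gC' n‖ := by
      rw [hrel]
      rw [norm_mul, norm_neg, norm_mul]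
      have : ‖((2 * L : ℝ) : ℂ)‖ = 2 * L := by
        rw [Complex.norm_real]; exact abs_of_pos h2L
      rw [this]
      ring
    have hq : ‖(1 : ℂ) / (-2 * ↑π * Complex.I * (n : ℂ))‖ ≤ 1 / (2 * π) := by
      have hform : (-2 * ↑π * Complex.I * (n : ℂ)) = Complex.I * ((-2 * π * n : ℝ) : ℂ) := by
        push_cast; ring
      rw [norm_div, hform, norm_mul, Complex.norm_I, Complex.norm_real, one_mul, norm_one,
        Real.norm_eq_abs]
      have h1 : (1:ℝ) ≤ |(n : ℝ)| := by
        have : (1:ℤ) ≤ |n| := Int.one_le_abs hn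
        calc (1:ℝ) ≤ (|n| : ℤ) := by exact_mod_cast this
        _ = |(n:ℝ)| := by push_cast; rfl
      have h2 : |(-2 * π * n : ℝ)| = 2 * π * |(n:ℝ)| := by
        rw [abs_mul, abs_mul]
        have : |(-2 : ℝ)| = 2 := by norm_num
        rw [this, abs_of_pos pi_pos]
      rw [h2]
      rw [div_le_div_iff₀ (by positivity) (by positivity)]
      nlinarith [pi_pos]
    have hle : ‖fourierCoeffOn hsb gC n‖ ≤ (L / π) * ‖fourierCoeffOn hsb gC' n‖ := by
      rw [hnorm]
      have : ‖(1 : ℂ) / (-2 * ↑π * Complex.I * (n : ℂ))‖ * (2 * L) ≤ L / π := by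
        calc ‖(1 : ℂ) / (-2 * ↑π * Complex.I * (n : ℂ))‖ * (2 * L)
            ≤ (1 / (2 * π)) * (2 * L) := by
              apply mul_le_mul_of_nonneg_right hq (by linarith)
          _ = L / π := by field_simp
      exact mul_le_mul_of_nonneg_right this (norm_nonneg _)
    have h0 : (0:ℝ) ≤ ‖fourierCoeffOn hsb gC n‖ := norm_nonneg _
    calc ‖fourierCoeffOn hsb gC n‖ ^ 2 ≤ ((L / π) * ‖fourierCoeffOn hsb gC' n‖) ^ 2 := by
          apply pow_le_pow_left₀ h0 hle
      _ = (L / π) ^ 2 * ‖fourierCoeffOn hsb gC' n‖ ^ 2 := by ring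
  -- zeroth coefficient vanishes
  have hmean : fourierCoeffOn hsb gC 0 = 0 := by
    rw [fourierCoeffOn_eq_integral]
    have : ∀ x : ℝ, fourier (-(0:ℤ)) (x : AddCircle (s + 2 * L - s)) • gC x = gC x := by
      intro x; simp [fourier_zero]
    simp_rw [this]
    have hint0 : (∫ t in s..s + 2 * L, gC t) = ((∫ t in s..s + 2 * L, g t : ℝ) : ℂ) :=
      intervalIntegral.integral_ofReal
    have hsplit : (∫ t in s..s + 2 * L, g t) = (∫ t in s..a, g t) + ∫ t in a..s + 2 * L, g t := by
      rw [intervalIntegral.integral_add_adjacent_intervals] <;>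
        exact hgc.intervalIntegrable _ _
    have hleft : (∫ t in s..a, g t) = -∫ t in a..b, u t := by
      have : (∫ t in s..a, g t) = ∫ t in s..a, -u (2 * a - t) := by
        apply intervalIntegral.integral_congr
        intro t ht
        rw [uIcc_of_le hsa.le] at ht
        rcases eq_or_lt_of_le ht.2 with h | h
        · have ha' : u t = 0 := by rw [h]; exact ha
          simp [← h, hgdef, ha', show (2:ℝ) * t - t = t from by ring]
        · simp [hgdef, not_le.mpr h]
      rw [this, intervalIntegral.integral_neg]
      congr 1
      have := intervalIntegral.integral_comp_sub_left (a := s) (b := a) u (2 * a)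
      rw [this]
      have e1 : 2 * a - a = a := by ring
      have e2 : 2 * a - s = b := by simp [hsdef, hLdef]; ring
      rw [e1, e2]
    have hright : (∫ t in a..s + 2 * L, g t) = ∫ t in a..b, u t := by
      rw [hsT]
      apply intervalIntegral.integral_congr
      intro t ht
      rw [uIcc_of_le hab.le] at ht
      simp [hgdef, ht.1]
    rw [hsplit, hleft, hright] at hint0
    simp at hint0 ⊢
    rw [hint0]
    simp
  -- Parseval for gC and gC'
  have hper : gC s = gC (s + 2 * L) := by simp [hgCdef, hga, hgb]
  have hper' : gC' s = gC' (s + 2 * L) := by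
    have h1 : ¬ a ≤ s := not_le.mpr hsa
    have h2 : 2 * a - s = b := by simp [hsdef, hLdef]; ring
    rw [hsT]
    simp [hgC'def, hg'def, h1, h2, hab.le]
  have P1 := myParseval h2L s gC (hgCc.continuousOn) hper
  have P2 := myParseval h2L s gC' (hgC'c.continuousOn) hper'
  -- identify the interval integrals
  have hIg : (∫ t in s..s + 2 * L, ‖gC t‖ ^ 2) = 2 * ∫ t in a..b, u t ^ 2 := by
    have hnormsq : ∀ t : ℝ, ‖gC t‖ ^ 2 = g t ^ 2 := by
      intro t; rw [hgCdef]; simp [Complex.norm_real, sq_abs]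
    simp_rw [hnormsq]
    have hsplit : (∫ t in s..s + 2 * L, g t ^ 2)
        = (∫ t in s..a, g t ^ 2) + ∫ t in a..s + 2 * L, g t ^ 2 := by
      rw [intervalIntegral.integral_add_adjacent_intervals] <;>
        exact ((hgc.pow 2).intervalIntegrable _ _)
    have hleft : (∫ t in s..a, g t ^ 2) = ∫ t in a..b, u t ^ 2 := by
      have h1 : (∫ t in s..a, g t ^ 2) = ∫ t in s..a, u (2 * a - t) ^ 2 := by
        apply intervalIntegral.integral_congr
        intro t ht
        rw [uIcc_of_le hsa.le] at ht
        rcases eq_or_lt_of_le ht.2 with h | h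
        · simp [← h, hgdef, ha, show (2:ℝ) * t - t = t from by ring]
        · simp [hgdef, not_le.mpr h]
      rw [h1]
      have := intervalIntegral.integral_comp_sub_left (a := s) (b := a)
        (fun x => u x ^ 2) (2 * a)
      rw [this]
      have e1 : 2 * a - a = a := by ring
      have e2 : 2 * a - s = b := by simp [hsdef, hLdef]; ring
      rw [e1, e2]
    have hright : (∫ t in a..s + 2 * L, g t ^ 2) = ∫ t in a..b, u t ^ 2 := by
      rw [hsT]
      apply intervalIntegral.integral_congr
      intro t ht
      rw [uIcc_of_le hab.le] at ht
      simp [hgdef, ht.1]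
    rw [hsplit, hleft, hright]; ring
  have hIg' : (∫ t in s..s + 2 * L, ‖gC' t‖ ^ 2) = 2 * ∫ t in a..b, (deriv u t) ^ 2 := by
    have hnormsq : ∀ t : ℝ, ‖gC' t‖ ^ 2 = g' t ^ 2 := by
      intro t; rw [hgC'def]; simp [Complex.norm_real, sq_abs]
    simp_rw [hnormsq]
    have hsplit : (∫ t in s..s + 2 * L, g' t ^ 2)
        = (∫ t in s..a, g' t ^ 2) + ∫ t in a..s + 2 * L, g' t ^ 2 := by
      rw [intervalIntegral.integral_add_adjacent_intervals] <;>
        exact ((hg'c.pow 2).intervalIntegrable _ _)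
    have hleft : (∫ t in s..a, g' t ^ 2) = ∫ t in a..b, (deriv u t) ^ 2 := by
      have h1 : (∫ t in s..a, g' t ^ 2) = ∫ t in s..a, (deriv u (2 * a - t)) ^ 2 := by
        apply intervalIntegral.integral_congr
        intro t ht
        rw [uIcc_of_le hsa.le] at ht
        rcases eq_or_lt_of_le ht.2 with h | h
        · simp [← h, hg'def, show (2:ℝ) * t - t = t from by ring]
        · simp [hg'def, not_le.mpr h]
      rw [h1]
      have := intervalIntegral.integral_comp_sub_left (a := s) (b := a)
        (fun x => (deriv u x) ^ 2) (2 * a)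
      rw [this]
      have e1 : 2 * a - a = a := by ring
      have e2 : 2 * a - s = b := by simp [hsdef, hLdef]; ring
      rw [e1, e2]
    have hright : (∫ t in a..s + 2 * L, g' t ^ 2) = ∫ t in a..b, (deriv u t) ^ 2 := by
      rw [hsT]
      apply intervalIntegral.integral_congr
      intro t ht
      rw [uIcc_of_le hab.le] at ht
      simp [hg'def, ht.1]
    rw [hsplit, hleft, hright]; ring
  -- compare sums
  have hfc_eq : ∀ (f : ℝ → ℂ) (n : ℤ),
      fourierCoeffOn (lt_add_of_pos_right s h2L) f n = fourierCoeffOn hsb f n := fun f n => rfl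
  have hsum_le : (∑' n : ℤ, ‖fourierCoeffOn hsb gC n‖ ^ 2)
      ≤ (L / π) ^ 2 * ∑' n : ℤ, ‖fourierCoeffOn hsb gC' n‖ ^ 2 := by
    have hS1 : Summable (fun n : ℤ => ‖fourierCoeffOn hsb gC n‖ ^ 2) := by
      have := P1.1; simpa [hfc_eq] using this
    have hS2 : Summable (fun n : ℤ => (L / π) ^ 2 * ‖fourierCoeffOn hsb gC' n‖ ^ 2) := by
      have := P2.1
      simp only [hfc_eq] at this
      exact this.mul_left _
    have hterm : ∀ n : ℤ, ‖fourierCoeffOn hsb gC n‖ ^ 2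
        ≤ (L / π) ^ 2 * ‖fourierCoeffOn hsb gC' n‖ ^ 2 := by
      intro n
      rcases eq_or_ne n 0 with rfl | hn
      · rw [hmean]
        have : ‖(0:ℂ)‖ ^ 2 = 0 := by simp
        rw [this]
        positivity
      · exact hcoeff n hn
    calc (∑' n : ℤ, ‖fourierCoeffOn hsb gC n‖ ^ 2)
        ≤ ∑' n : ℤ, (L / π) ^ 2 * ‖fourierCoeffOn hsb gC' n‖ ^ 2 :=
          Summable.tsum_le_tsum hterm hS1 hS2
      _ = (L / π) ^ 2 * ∑' n : ℤ, ‖fourierCoeffOn hsb gC' n‖ ^ 2 := tsum_mul_left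
  -- put everything together
  have hP1 : 2 * L * ∑' n : ℤ, ‖fourierCoeffOn hsb gC n‖ ^ 2 = 2 * ∫ t in a..b, u t ^ 2 := by
    have := P1.2; simp only [hfc_eq] at this; rw [this, hIg]
  have hP2 : 2 * L * ∑' n : ℤ, ‖fourierCoeffOn hsb gC' n‖ ^ 2
      = 2 * ∫ t in a..b, (deriv u t) ^ 2 := by
    have := P2.2; simp only [hfc_eq] at this; rw [this, hIg']
  have hπ := pi_pos
  have hfinal : (∫ t in a..b, u t ^ 2) ≤ (L / π) ^ 2 * ∫ t in a..b, (deriv u t) ^ 2 := by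
    nlinarith [hsum_le, hP1, hP2]
  have hπ0 : π ≠ 0 := ne_of_gt hπ
  have hL0 : L ≠ 0 := ne_of_gt hL
  calc (π / L) ^ 2 * ∫ t in a..b, u t ^ 2
      ≤ (π / L) ^ 2 * ((L / π) ^ 2 * ∫ t in a..b, (deriv u t) ^ 2) :=
        mul_le_mul_of_nonneg_left hfinal (sq_nonneg _)
    _ = ∫ t in a..b, (deriv u t) ^ 2 := by
        rw [← mul_assoc, show (π / L) ^ 2 * (L / π) ^ 2 = 1 by field_simp, one_mul]

set_option maxHeartbeats 1000000 in
/-- A priori `L²` gradient bound for solutions of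
`u⁗ - p u'' + c u = h`, `u(a)=u(b)=u''(a)=u''(b)=0`, when
`-(π/(b-a))⁴ - p(π/(b-a))² < c_m := min_I c ≤ 0`. -/
theorem stmt_9 (a b p : ℝ) (hab : a < b) (hp : 0 ≤ p) (c h : ℝ → ℝ)
    (hc : ContinuousOn c (Set.Icc a b)) (hh : ContinuousOn h (Set.Icc a b))
    (cm : ℝ) (hcm : IsLeast (c '' Set.Icc a b) cm)
    (hcm1 : -(π / (b - a)) ^ 4 - p * (π / (b - a)) ^ 2 < cm) (hcm2 : cm ≤ 0)
    (u : ℝ → ℝ) (hu : ContDiff ℝ 4 u)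
    (heq : ∀ t ∈ Set.Icc a b,
      iteratedDeriv 4 u t - p * iteratedDeriv 2 u t + c t * u t = h t)
    (hua : u a = 0) (hub : u b = 0)
    (hua'' : iteratedDeriv 2 u a = 0) (hub'' : iteratedDeriv 2 u b = 0) :
    Real.sqrt (∫ t in a..b, (deriv u t) ^ 2) ≤
      (π / Real.sqrt (b - a)) *
        sSup ((fun t => |h t|) '' Set.Icc a b) /
          ((π / (b - a)) ^ 4 + p * (π / (b - a)) ^ 2 + cm) := by
  have hL : 0 < b - a := sub_pos.mpr hab
  set u1 := deriv u with hu1def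
  set u2 := deriv u1 with hu2def
  set u3 := deriv u2 with hu3def
  set u4 := deriv u3 with hu4def
  -- smoothness facts
  have hcd1 : ContDiff ℝ 3 u1 := by
    have h1 := ContDiff.iterate_deriv' 3 1 (f := u) (by exact_mod_cast hu)
    rwa [Function.iterate_one] at h1
  have hcd2 : ContDiff ℝ 2 u2 := by
    have h1 := ContDiff.iterate_deriv' 2 2 (f := u) (by exact_mod_cast hu)
    have h2 : deriv^[2] u = u2 := by
      rw [hu2def, hu1def]; rfl
    rwa [h2] at h1
  have hcd3 : ContDiff ℝ 1 u3 := by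
    have h1 := ContDiff.iterate_deriv' 1 3 (f := u) (by exact_mod_cast hu)
    have h2 : deriv^[3] u = u3 := by
      rw [hu3def, hu2def, hu1def]; rfl
    rwa [h2] at h1
  have hcd4 : ContDiff ℝ 0 u4 := by
    have h1 := ContDiff.iterate_deriv' 0 4 (f := u) (by exact_mod_cast hu)
    have h2 : deriv^[4] u = u4 := by
      rw [hu4def, hu3def, hu2def, hu1def]; rfl
    rwa [h2] at h1
  have hud : Differentiable ℝ u := hu.differentiable (by norm_num)
  have hud1 : Differentiable ℝ u1 := hcd1.differentiable (by norm_num)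
  have hud2 : Differentiable ℝ u2 := hcd2.differentiable (by norm_num)
  have hud3 : Differentiable ℝ u3 := hcd3.differentiable (by norm_num)
  have huc : Continuous u := hud.continuous
  have hu1c : Continuous u1 := hud1.continuous
  have hu2c : Continuous u2 := hud2.continuous
  have hu3c : Continuous u3 := hud3.continuous
  have hu4c : Continuous u4 := hcd4.continuous
  -- iterated derivatives
  have e2 : iteratedDeriv 2 u = u2 := by
    rw [iteratedDeriv_eq_iterate, hu2def, hu1def]; rfl
  have e4 : iteratedDeriv 4 u = u4 := by
    rw [iteratedDeriv_eq_iterate, hu4def, hu3def, hu2def, hu1def]; rfl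
  rw [e2] at hua'' hub''
  -- the three basic integrals
  set I0 := ∫ t in a..b, u t ^ 2 with hI0def
  set I1 := ∫ t in a..b, u1 t ^ 2 with hI1def
  set I2 := ∫ t in a..b, u2 t ^ 2 with hI2def
  have hI0n : 0 ≤ I0 := intervalIntegral.integral_nonneg hab.le (fun t _ => sq_nonneg _)
  have hI1n : 0 ≤ I1 := intervalIntegral.integral_nonneg hab.le (fun t _ => sq_nonneg _)
  have hI2n : 0 ≤ I2 := intervalIntegral.integral_nonneg hab.le (fun t _ => sq_nonneg _)
  -- integration by parts
  have ibpA : (∫ t in a..b, u t * u4 t) = I2 := by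
    have step1 := intervalIntegral.integral_mul_deriv_eq_deriv_mul
      (u := u) (v := u3) (u' := u1) (v' := u4)
      (fun x _ => (hud x).hasDerivAt) (fun x _ => (hud3 x).hasDerivAt)
      (hu1c.intervalIntegrable a b) (hu4c.intervalIntegrable a b)
    have step2 := intervalIntegral.integral_mul_deriv_eq_deriv_mul
      (u := u1) (v := u2) (u' := u2) (v' := u3)
      (fun x _ => (hud1 x).hasDerivAt) (fun x _ => (hud2 x).hasDerivAt)
      (hu2c.intervalIntegrable a b) (hu3c.intervalIntegrable a b)
    rw [hua, hub] at step1
    rw [hua'', hub''] at step2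
    simp only [zero_mul, mul_zero, sub_zero, zero_sub] at step1 step2
    rw [step1, step2]
    have : (∫ t in a..b, u2 t * u2 t) = I2 := by
      rw [hI2def]; congr 1; funext t; ring
    rw [this]; ring
  have ibpC : (∫ t in a..b, u t * u2 t) = -I1 := by
    have step := intervalIntegral.integral_mul_deriv_eq_deriv_mul
      (u := u) (v := u1) (u' := u1) (v' := u2)
      (fun x _ => (hud x).hasDerivAt) (fun x _ => (hud1 x).hasDerivAt)
      (hu1c.intervalIntegrable a b) (hu2c.intervalIntegrable a b)
    rw [hua, hub] at step
    simp only [zero_mul, mul_zero, sub_zero, zero_sub] at step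
    rw [step]
    have : (∫ t in a..b, u1 t * u1 t) = I1 := by
      rw [hI1def]; congr 1; funext t; ring
    rw [this]
  -- integrability of the pieces on [a,b]
  have hIcc : uIcc a b = Icc a b := uIcc_of_le hab.le
  have hint_cu2 : IntervalIntegrable (fun t => c t * u t ^ 2) volume a b := by
    apply ContinuousOn.intervalIntegrable
    rw [hIcc]
    exact hc.mul ((huc.pow 2).continuousOn)
  have hint_hu : IntervalIntegrable (fun t => u t * h t) volume a b := by
    apply ContinuousOn.intervalIntegrable
    rw [hIcc]
    exact (huc.continuousOn).mul hh
  have hint_uu4 : IntervalIntegrable (fun t => u t * u4 t) volume a b :=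
    (huc.mul hu4c).intervalIntegrable a b
  have hint_uu2 : IntervalIntegrable (fun t => u t * u2 t) volume a b :=
    (huc.mul hu2c).intervalIntegrable a b
  -- energy identity
  have henergy : I2 + p * I1 + (∫ t in a..b, c t * u t ^ 2) = ∫ t in a..b, u t * h t := by
    have hsplit : (∫ t in a..b, u t * h t)
        = (∫ t in a..b, (u t * u4 t - p * (u t * u2 t) + c t * u t ^ 2)) := by
      apply intervalIntegral.integral_congr
      intro t ht
      rw [hIcc] at ht
      have := heq t ht
      rw [e2, e4] at this
      show u t * h t = u t * u4 t - p * (u t * u2 t) + c t * u t ^ 2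
      rw [← this]; ring
    rw [hsplit, intervalIntegral.integral_add (IntervalIntegrable.sub hint_uu4
      (hint_uu2.const_mul p)) hint_cu2,
      intervalIntegral.integral_sub hint_uu4 (hint_uu2.const_mul p),
      intervalIntegral.integral_const_mul, ibpA, ibpC]
    ring
  -- lower bound for the potential term
  have hpot : cm * I0 ≤ ∫ t in a..b, c t * u t ^ 2 := by
    rw [hI0def, ← intervalIntegral.integral_const_mul]
    apply intervalIntegral.integral_mono_on hab.le
    · apply ContinuousOn.intervalIntegrable
      rw [hIcc]
      exact continuousOn_const.mul ((huc.pow 2).continuousOn)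
    · exact hint_cu2
    · intro t ht
      have h1 : cm ≤ c t := hcm.2 ⟨t, ht, rfl⟩
      have h2 : 0 ≤ u t ^ 2 := sq_nonneg _
      exact mul_le_mul_of_nonneg_right h1 h2
  -- the sup of |h|
  set M := sSup ((fun t => |h t|) '' Set.Icc a b) with hMdef
  have hMb : ∀ t ∈ Icc a b, |h t| ≤ M := by
    intro t ht
    apply le_csSup
    · exact IsCompact.bddAbove_image isCompact_Icc hh.abs
    · exact ⟨t, ht, rfl⟩
  have hM0 : 0 ≤ M := le_trans (abs_nonneg _) (hMb a ⟨le_rfl, hab.le⟩)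
  -- RHS of the energy bound
  have habs : (∫ t in a..b, u t * h t) ≤ M * ∫ t in a..b, |u t| := by
    rw [← intervalIntegral.integral_const_mul]
    apply intervalIntegral.integral_mono_on hab.le hint_hu
    · apply ContinuousOn.intervalIntegrable
      rw [hIcc]
      exact continuousOn_const.mul (huc.abs.continuousOn)
    · intro t ht
      calc u t * h t ≤ |u t * h t| := le_abs_self _
        _ = |u t| * |h t| := abs_mul _ _
        _ ≤ |u t| * M := mul_le_mul_of_nonneg_left (hMb t ht) (abs_nonneg _)
        _ = M * |u t| := mul_comm _ _
  -- L¹–L² bound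
  set sb := Real.sqrt (b - a) with hsbdef
  have hsb0 : 0 < sb := Real.sqrt_pos.mpr hL
  have hsb2 : sb ^ 2 = b - a := Real.sq_sqrt hL.le
  set x := Real.sqrt I0 with hxdef
  have hx0 : 0 ≤ x := Real.sqrt_nonneg _
  have hx2 : x ^ 2 = I0 := Real.sq_sqrt hI0n
  have hl1 : (∫ t in a..b, |u t|) ≤ x * sb := by
    have hcs := myCS hab.le (f := fun t => |u t|) (g := fun _ => (1:ℝ))
      (huc.abs.continuousOn) (continuous_const.continuousOn)
    simp only [mul_one, one_pow] at hcs
    have hone : (∫ t in a..b, (1:ℝ)) = b - a := by simp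
    have habs2 : (∫ t in a..b, |u t| ^ 2) = I0 := by
      rw [hI0def]; congr 1; funext t; rw [sq_abs]
    rw [hone, habs2] at hcs
    have hsq : (∫ t in a..b, |u t|) ^ 2 ≤ (x * sb) ^ 2 := by
      rw [mul_pow, hx2, hsb2]; exact hcs
    exact le_of_pow_le_pow_left₀ (by norm_num) (mul_nonneg hx0 hsb0.le) hsq
  -- the combined energy estimate
  have hE : I2 + p * I1 + cm * I0 ≤ M * sb * x := by
    have h1 : I2 + p * I1 + cm * I0 ≤ ∫ t in a..b, u t * h t := by
      rw [← henergy]; linarith only [hpot]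
    have h2 : M * (∫ t in a..b, |u t|) ≤ M * (x * sb) :=
      mul_le_mul_of_nonneg_left hl1 hM0
    calc I2 + p * I1 + cm * I0 ≤ ∫ t in a..b, u t * h t := h1
      _ ≤ M * ∫ t in a..b, |u t| := habs
      _ ≤ M * (x * sb) := h2
      _ = M * sb * x := by ring
  -- Wirtinger inequalities
  set θ := π / (b - a) with hθdef
  have hθ0 : 0 < θ := div_pos pi_pos hL
  have W1 : θ ^ 2 * I0 ≤ I1 := myWirtinger hab hud hu1c hua hub
  have W2 : I1 ^ 2 ≤ I0 * I2 := by
    have hcs := myCS hab.le (f := u) (g := u2) huc.continuousOn hu2c.continuousOn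
    rw [ibpC] at hcs
    calc I1 ^ 2 = (-I1) ^ 2 := by ring
      _ ≤ I0 * I2 := hcs
  -- the constant
  set K := (π / (b - a)) ^ 4 + p * (π / (b - a)) ^ 2 + cm with hKdef
  have hK : 0 < K := by rw [hKdef]; linarith only [hcm1]
  have hKθ : K = θ ^ 4 + p * θ ^ 2 + cm := by rw [hKdef, hθdef]
  -- handle degenerate case
  set y := Real.sqrt I1 with hydef
  have hy0 : 0 ≤ y := Real.sqrt_nonneg _
  have hy2 : y ^ 2 = I1 := Real.sq_sqrt hI1n
  have hRHS0 : 0 ≤ π / sb * M / K :=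
    div_nonneg (mul_nonneg (div_nonneg pi_pos.le hsb0.le) hM0) hK.le
  clear_value u1 u2 u3 u4 I0 I1 I2 M sb x θ K y
  rcases eq_or_lt_of_le hy0 with hy | hy
  · exact le_trans (le_of_eq hy.symm) hRHS0
  -- main case: y > 0
  have hI1pos : 0 < I1 := by rw [← hy2]; exact pow_pos hy 2
  -- θ² I1 ≤ I2
  have hI2b : θ ^ 2 * I1 ≤ I2 := by
    have h1 : θ ^ 2 * I1 ^ 2 ≤ θ ^ 2 * (I0 * I2) := mul_le_mul_of_nonneg_left W2 (sq_nonneg _)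
    have h2 : θ ^ 2 * I0 * I2 ≤ I1 * I2 := mul_le_mul_of_nonneg_right W1 hI2n
    have h3 : I1 * (θ ^ 2 * I1) ≤ I1 * I2 := by
      calc I1 * (θ ^ 2 * I1) = θ ^ 2 * I1 ^ 2 := by ring
        _ ≤ θ ^ 2 * (I0 * I2) := h1
        _ = θ ^ 2 * I0 * I2 := by ring
        _ ≤ I1 * I2 := h2
    exact (mul_le_mul_iff_right₀ hI1pos).mp h3
  -- x ≤ y / θ
  have hxy : θ * x ≤ y := by
    have h1 : (θ * x) ^ 2 ≤ y ^ 2 := by rw [hy2, mul_pow, hx2]; exact W1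
    exact le_of_pow_le_pow_left₀ (by norm_num) hy0 h1
  -- chain
  have hcm_lb : cm * (y ^ 2 / θ ^ 2) ≤ cm * I0 := by
    have hI0b : I0 ≤ y ^ 2 / θ ^ 2 := by
      rw [le_div_iff₀ (by positivity)]
      rw [hy2]; linarith [W1]
    exact mul_le_mul_of_nonpos_left hI0b hcm2
  have hchain : θ ^ 2 * y ^ 2 + p * y ^ 2 + cm * (y ^ 2 / θ ^ 2) ≤ M * sb * (y / θ) := by
    have h1 : θ ^ 2 * y ^ 2 + p * y ^ 2 + cm * (y ^ 2 / θ ^ 2) ≤ I2 + p * I1 + cm * I0 := by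
      have hA : θ ^ 2 * y ^ 2 ≤ I2 := by rw [hy2]; exact hI2b
      have hB : p * y ^ 2 = p * I1 := by rw [hy2]
      linarith only [hA, hcm_lb, hB]
    have h2 : M * sb * x ≤ M * sb * (y / θ) := by
      apply mul_le_mul_of_nonneg_left _ (mul_nonneg hM0 hsb0.le)
      rw [le_div_iff₀ hθ0]
      linarith only [hxy]
    linarith only [h1, hE, h2]
  -- multiply by θ² and divide by y
  have hKy2 : K * y ^ 2 ≤ M * sb * θ * y := by
    have h1 := mul_le_mul_of_nonneg_left hchain (le_of_lt (show (0:ℝ) < θ ^ 2 by positivity))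
    have hθne : θ ≠ 0 := ne_of_gt hθ0
    have e1 : θ ^ 2 * (θ ^ 2 * y ^ 2 + p * y ^ 2 + cm * (y ^ 2 / θ ^ 2)) = K * y ^ 2 := by
      rw [hKθ]; field_simp
    have e2 : θ ^ 2 * (M * sb * (y / θ)) = M * sb * θ * y := by
      field_simp
    rw [e1, e2] at h1
    exact h1
  have hsbθ : sb * θ = π / sb := by
    rw [hθdef, ← hsb2]
    field_simp
  have hKy : K * y ≤ π / sb * M := by
    have h1 : K * y * y ≤ (π / sb * M) * y := by
      calc K * y * y = K * y ^ 2 := by ring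
        _ ≤ M * sb * θ * y := hKy2
        _ = (π / sb * M) * y := by rw [show M * sb * θ = M * (sb * θ) by ring, hsbθ]; ring
    exact le_of_mul_le_mul_right h1 hy
  rw [le_div_iff₀ hK]
  linarith only [hKy]
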